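/- arXiv:2403.09951 — 2 statements merged into one kernel-verified Lean document; each statement's English description precedes it below -/
import Mathlib

section
/- For the SO(n) AKLT transfer operator E₁(B) = (1/n)·Σᵢ γᵢ B γᵢ on the Clifford algebra C_n, each basis element γ_I is an eigenvector with eigenvalue λ_I = (−1)^{|I|}·(n − 2|I|)/n; in particular E₁(1) = 1, and for n even E₁(γ₀) = −γ₀, while |λ_I| < 1 for all 0 < |I| < n. -/
open Matrix

/-- The ordered product `γ_I` over the increasingly-sorted multi-index `I`. -/
noncomputable def gammaProd {n N : ℕ} (γ : Fin n → Matrix (Fin N) (Fin N) ℂ)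
    (I : Finset (Fin n)) : Matrix (Fin N) (Fin N) ℂ :=
  ((I.sort (· ≤ ·)).map γ).prod

/-- The normalized top product `γ₀`, with prefactor `i` when `n ≡ 2,3 mod 4`. -/
noncomputable def gamma0 {n N : ℕ} (γ : Fin n → Matrix (Fin N) (Fin N) ℂ) :
    Matrix (Fin N) (Fin N) ℂ :=
  (if n % 4 = 2 ∨ n % 4 = 3 then Complex.I else 1) • (List.ofFn γ).prod

/-- The SO(n) AKLT transfer operator `E₁(B) = (1/n) Σᵢ γᵢ B γᵢ`. -/
noncomputable def transferE1 {n N : ℕ} (γ : Fin n → Matrix (Fin N) (Fin N) ℂ)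
    (B : Matrix (Fin N) (Fin N) ℂ) : Matrix (Fin N) (Fin N) ℂ :=
  (n : ℂ)⁻¹ • ∑ i : Fin n, γ i * B * γ i

section aux
variable {n N : ℕ} (γ : Fin n → Matrix (Fin N) (Fin N) ℂ)
  (hrel : ∀ i j, γ i * γ j + γ j * γ i =
      if i = j then (2 : ℂ) • (1 : Matrix (Fin N) (Fin N) ℂ) else 0)

include hrel

lemma gsq (i : Fin n) : γ i * γ i = 1 := by
  have h := hrel i i
  simp only [if_pos rfl] at h
  have h2 : (2 : ℂ) • (γ i * γ i) = (2 : ℂ) • (1 : Matrix (Fin N) (Fin N) ℂ) := by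
    rw [two_smul]; exact h
  exact smul_right_injective _ (two_ne_zero) h2

lemma ganti {i j : Fin n} (hij : j ≠ i) : γ i * γ j = -(γ j * γ i) := by
  have h := hrel i j
  rw [if_neg (fun h' => hij h'.symm)] at h
  linear_combination (norm := abel) h

lemma move (i : Fin n) : ∀ L : List (Fin n),
    γ i * (L.map γ).prod =
      ((-1 : ℂ) ^ (L.countP (fun j => decide (j ≠ i)))) • ((L.map γ).prod * γ i)
  | [] => by simp
  | j :: t => by
    have ih := move i t
    rw [List.map_cons, List.prod_cons]
    by_cases hji : j = i
    · subst hji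
      have hc : (j :: t).countP (fun j' => decide (j' ≠ j)) =
          t.countP (fun j' => decide (j' ≠ j)) := by
        simp [List.countP_cons]
      rw [hc]
      conv_rhs => rw [mul_assoc, ← Matrix.mul_smul, ← ih, ← mul_assoc, gsq γ hrel, one_mul]
      rw [← mul_assoc, gsq γ hrel, one_mul]
    · have hc : (j :: t).countP (fun j' => decide (j' ≠ i)) =
          t.countP (fun j' => decide (j' ≠ i)) + 1 := by
        simp [List.countP_cons, hji]
      rw [hc]
      rw [← mul_assoc, ganti γ hrel hji, neg_mul, mul_assoc, ih, Matrix.mul_smul,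
        pow_succ, mul_neg_one, neg_smul, mul_assoc]

lemma conjg (i : Fin n) (I : Finset (Fin n)) :
    γ i * gammaProd γ I * γ i =
      ((if i ∈ I then (-1 : ℂ) ^ (I.card - 1) else (-1 : ℂ) ^ I.card)) • gammaProd γ I := by
  set L := I.sort (· ≤ ·) with hL
  have hlen : L.length = I.card := Finset.length_sort _
  have hkey : L.countP (fun j => decide (j = i)) + L.countP (fun j => decide (j ≠ i)) = L.length := by
    have h := L.length_eq_countP_add_countP (fun j => decide (j = i))
    simpa using h.symm
  have hcnt : L.countP (fun j => decide (j = i)) = if i ∈ I then 1 else 0 := by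
    have hce : L.count i = L.countP (fun j => decide (j = i)) := by
      unfold List.count
      exact List.countP_congr (fun a _ => by simp)
      -- done
    rw [← hce]
    by_cases h : i ∈ I
    · rw [List.count_eq_one_of_mem (Finset.sort_nodup _ _) ((Finset.mem_sort _).2 h), if_pos h]
    · rw [List.count_eq_zero_of_not_mem, if_neg h]
      simpa [hL, Finset.mem_sort] using h
  have hc : L.countP (fun j => decide (j ≠ i)) =
      if i ∈ I then I.card - 1 else I.card := by
    by_cases h : i ∈ I
    · rw [if_pos h] at hcnt ⊢
      omega
    · rw [if_neg h] at hcnt ⊢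
      omega
  have hm := move γ hrel i L
  rw [gammaProd, ← hL, hm, Matrix.smul_mul, mul_assoc, gsq γ hrel, mul_one, hc]
  by_cases h : i ∈ I <;> simp [h]

end aux

section main
variable {n N : ℕ} (γ : Fin n → Matrix (Fin N) (Fin N) ℂ)
  (hrel : ∀ i j, γ i * γ j + γ j * γ i =
      if i = j then (2 : ℂ) • (1 : Matrix (Fin N) (Fin N) ℂ) else 0)

include hrel

lemma key (hn : 0 < n) (I : Finset (Fin n)) :
    transferE1 γ (gammaProd γ I) =
      (((-1 : ℂ)) ^ I.card * ((n : ℂ) - 2 * I.card) / n) • gammaProd γ I := by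
  have hcard : I.card ≤ n := by
    simpa using Finset.card_le_univ I
  have hsum : ∑ i : Fin n,
      (if i ∈ I then (-1 : ℂ) ^ (I.card - 1) else (-1 : ℂ) ^ I.card) =
      (-1 : ℂ) ^ I.card * ((n : ℂ) - 2 * I.card) := by
    have e1 : Finset.univ.filter (fun i => i ∈ I) = I := by ext; simp
    have e2 : Finset.univ.filter (fun i => ¬ i ∈ I) = Iᶜ := by ext; simp
    rw [Finset.sum_ite, Finset.sum_const, Finset.sum_const, e1, e2,
      Finset.card_compl, Fintype.card_fin]
    rcases Nat.eq_zero_or_pos I.card with h0 | h0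
    · simp [h0]
    · have h1 : (-1 : ℂ) ^ I.card = (-1 : ℂ) ^ (I.card - 1) * (-1) := by
        rw [← pow_succ]
        congr 1
        omega
      rw [nsmul_eq_mul, nsmul_eq_mul, Nat.cast_sub hcard, h1]
      ring
  unfold transferE1
  rw [Finset.sum_congr rfl (fun i _ => conjg γ hrel i I), ← Finset.sum_smul, hsum,
    smul_smul]
  congr 1
  ring

lemma son_aklt_aux
    (hn : 0 < n)  :
    (∀ I : Finset (Fin n),
      transferE1 γ (gammaProd γ I) =
        (((-1 : ℂ)) ^ I.card * ((n : ℂ) - 2 * I.card) / n) • gammaProd γ I) ∧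
    transferE1 γ 1 = 1 ∧
    (Even n → transferE1 γ (gamma0 γ) = -(gamma0 γ)) ∧
    (∀ I : Finset (Fin n), 0 < I.card → I.card < n →
      ‖((-1 : ℂ)) ^ I.card * ((n : ℂ) - 2 * I.card) / n‖ < 1) := by
  have hn0 : (n : ℂ) ≠ 0 := Nat.cast_ne_zero.2 hn.ne'
  refine ⟨key γ hrel hn, ?_, ?_, ?_⟩
  · have h2 := key γ hrel hn ∅
    have h1 : gammaProd γ ∅ = (1 : Matrix (Fin N) (Fin N) ℂ) := by simp [gammaProd]
    rw [h1] at h2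
    simpa [div_self hn0] using h2
  · intro hev
    have hg : gamma0 γ =
        (if n % 4 = 2 ∨ n % 4 = 3 then Complex.I else 1) • gammaProd γ Finset.univ := by
      rw [gamma0, gammaProd]
      congr 1
      rw [Fin.sort_univ, List.ofFn_eq_map]
    have hlin : ∀ (c : ℂ) (B : Matrix (Fin N) (Fin N) ℂ),
        transferE1 γ (c • B) = c • transferE1 γ B := by
      intro c B
      unfold transferE1
      rw [smul_comm]
      congr 1
      rw [Finset.smul_sum]
      exact Finset.sum_congr rfl fun i _ => by
        rw [Matrix.mul_smul, Matrix.smul_mul]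
    have hev1 : ((-1 : ℂ)) ^ (Finset.univ : Finset (Fin n)).card *
        ((n : ℂ) - 2 * (Finset.univ : Finset (Fin n)).card) / n = -1 := by
      rw [Finset.card_univ, Fintype.card_fin, hev.neg_one_pow, one_mul]
      field_simp
      ring
    rw [hg, hlin, key γ hrel hn Finset.univ, hev1, smul_comm, neg_one_smul]
  · intro I h1 h2
    have hreal : ((n : ℂ) - 2 * I.card) = (((n : ℝ) - 2 * I.card : ℝ) : ℂ) := by
      push_cast; ring
    have hnR : (0 : ℝ) < n := by exact_mod_cast hn
    rw [hreal, norm_div, norm_mul, norm_pow]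
    simp only [norm_neg, norm_one, one_pow, one_mul, Complex.norm_real, Real.norm_eq_abs,
      Complex.norm_natCast]
    rw [div_lt_one hnR, abs_lt]
    have hm1 : (1 : ℝ) ≤ I.card := by exact_mod_cast h1
    have hmn : (I.card : ℝ) + 1 ≤ n := by exact_mod_cast h2
    constructor <;> linarith

end main

/-- Each basis element `γ_I` is an eigenvector of the SO(n) AKLT transfer
operator with eigenvalue `λ_I = (-1)^{|I|} (n - 2|I|)/n`; in particular
`E₁(1) = 1`, for even `n` also `E₁(γ₀) = -γ₀`, and `|λ_I| < 1` whenever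
`0 < |I| < n`. -/
theorem son_aklt_transfer_operator_diagonalization
    {n N : ℕ} (hn : 0 < n)
    (γ : Fin n → Matrix (Fin N) (Fin N) ℂ)
    (hrel : ∀ i j, γ i * γ j + γ j * γ i =
      if i = j then (2 : ℂ) • (1 : Matrix (Fin N) (Fin N) ℂ) else 0) :
    (∀ I : Finset (Fin n),
      transferE1 γ (gammaProd γ I) =
        (((-1 : ℂ)) ^ I.card * ((n : ℂ) - 2 * I.card) / n) • gammaProd γ I) ∧
    transferE1 γ 1 = 1 ∧
    (Even n → transferE1 γ (gamma0 γ) = -(gamma0 γ)) ∧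
    (∀ I : Finset (Fin n), 0 < I.card → I.card < n →
      ‖((-1 : ℂ)) ^ I.card * ((n : ℂ) - 2 * I.card) / n‖ < 1) := by
  exact son_aklt_aux γ hrel hn
end

section
/- The SO(n) AKLT matrix product states ψ(B) = Σ_{i₁,…,i_ℓ} Tr(B γ_{i_ℓ}⋯γ_{i₁}) |i₁,…,i_ℓ⟩ are annihilated by each interaction term h_{x,x+1} = 1 + SWAP − 2Q, i.e. h_{x,x+1}·ψ(B) = 0 for all B in the Clifford algebra and all 1 ≤ x ≤ ℓ−1. -/
open Matrix

/-- The coefficient `Tr(B γ_{i_ℓ} ⋯ γ_{i₁})` of the SO(n) AKLT matrix product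
state `ψ(B) = Σ_{i₁,…,i_ℓ} Tr(B γ_{i_ℓ} ⋯ γ_{i₁}) |i₁,…,i_ℓ⟩` in the tensor
basis of `(ℂⁿ)^{⊗ℓ}`. -/
noncomputable def mpsCoeff {n N ℓ : ℕ} (γ : Fin n → Matrix (Fin N) (Fin N) ℂ)
    (B : Matrix (Fin N) (Fin N) ℂ) (i : Fin ℓ → Fin n) : ℂ :=
  Matrix.trace (B * ((List.ofFn fun k => γ (i k)).reverse).prod)

private lemma list_split {n N ℓ : ℕ} (γ : Fin n → Matrix (Fin N) (Fin N) ℂ)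
    (i : Fin ℓ → Fin n) (m : ℕ) (h : m + 1 < ℓ) :
    (List.ofFn fun k => γ (i k)) =
      ((List.ofFn fun k => γ (i k)).take m)
        ++ γ (i ⟨m, by omega⟩) :: γ (i ⟨m+1, h⟩) ::
          (List.ofFn fun k => γ (i k)).drop (m+2) := by
  set l := List.ofFn fun k => γ (i k) with hl
  have hlen : l.length = ℓ := by simp [hl]
  have h1 : l.drop m = l[m]'(by omega) :: l.drop (m+1) :=
    (List.getElem_cons_drop (as := l) (i := m) (by omega)).symm
  have h2 : l.drop (m+1) = l[m+1]'(by omega) :: l.drop (m+2) :=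
    (List.getElem_cons_drop (as := l) (i := m+1) (by omega)).symm
  have hm : l[m]'(by omega) = γ (i ⟨m, by omega⟩) := by
    simp [hl, List.getElem_ofFn]
  have hm1 : l[m+1]'(by omega) = γ (i ⟨m+1, h⟩) := by
    simp [hl, List.getElem_ofFn]
  conv_lhs => rw [← List.take_append_drop m l, h1, h2, hm, hm1]

private lemma mps_split {n N ℓ : ℕ} (γ : Fin n → Matrix (Fin N) (Fin N) ℂ)
    (B : Matrix (Fin N) (Fin N) ℂ) (i : Fin ℓ → Fin n) (m : ℕ) (h : m + 1 < ℓ) :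
    mpsCoeff γ B i =
      Matrix.trace (B * (((List.ofFn fun k => γ (i k)).drop (m+2)).reverse.prod *
        (γ (i ⟨m+1, h⟩) * (γ (i ⟨m, by omega⟩) *
          ((List.ofFn fun k => γ (i k)).take m).reverse.prod)))) := by
  rw [mpsCoeff]
  conv_lhs => rw [list_split γ i m h]
  simp [List.reverse_append, List.prod_append, mul_assoc]

private lemma take_congr {n N ℓ : ℕ} (γ : Fin n → Matrix (Fin N) (Fin N) ℂ)
    (i i' : Fin ℓ → Fin n) (m : ℕ)
    (h : ∀ k : Fin ℓ, (k : ℕ) < m → i k = i' k) :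
    (List.ofFn fun k => γ (i k)).take m = (List.ofFn fun k => γ (i' k)).take m := by
  apply List.ext_getElem (by simp)
  intro j h₁ h₂
  have hj : j < m ∧ j < ℓ := by
    simp only [List.length_take, List.length_ofFn, lt_inf_iff] at h₁
    exact h₁
  simp only [List.getElem_take, List.getElem_ofFn]
  exact congrArg γ (h ⟨j, hj.2⟩ hj.1)

private lemma drop_congr {n N ℓ : ℕ} (γ : Fin n → Matrix (Fin N) (Fin N) ℂ)
    (i i' : Fin ℓ → Fin n) (m : ℕ)
    (h : ∀ k : Fin ℓ, m ≤ (k : ℕ) → i k = i' k) :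
    (List.ofFn fun k => γ (i k)).drop m = (List.ofFn fun k => γ (i' k)).drop m := by
  apply List.ext_getElem (by simp)
  intro j h₁ h₂
  have hj : m + j < ℓ := by
    simp only [List.length_drop, List.length_ofFn] at h₁
    omega
  simp only [List.getElem_drop, List.getElem_ofFn]
  exact congrArg γ (h ⟨m + j, hj⟩ (Nat.le_add_right m j))

/-- The SO(n) AKLT matrix product states `ψ(B)` are annihilated by each
interaction term `h_{x,x+1} = 1 + SWAP - 2Q` applied to two adjacent sites
`x₀, x₁` (with `x₁ = x₀ + 1`): written in tensor-basis coordinates, the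
coefficient of `h_{x,x+1} ψ(B)` at every basis index `i` vanishes.  Here `SWAP`
exchanges the tensor factors `x₀, x₁` and `Q = |ξ⟩⟨ξ|` with
`ξ = (1/√n) Σⱼ |jj⟩` acts on the factors `x₀, x₁`. -/
theorem son_aklt_mps_are_ground_states
    {n N ℓ : ℕ}
    (γ : Fin n → Matrix (Fin N) (Fin N) ℂ)
    (hrel : ∀ i j, γ i * γ j + γ j * γ i =
      if i = j then (2 : ℂ) • (1 : Matrix (Fin N) (Fin N) ℂ) else 0)
    (B : Matrix (Fin N) (Fin N) ℂ)
    (x₀ x₁ : Fin ℓ) (hadj : (x₁ : ℕ) = (x₀ : ℕ) + 1)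
    (i : Fin ℓ → Fin n) :
    mpsCoeff γ B i
      + mpsCoeff γ B (i ∘ Equiv.swap x₀ x₁)
      - 2 * ((if i x₀ = i x₁ then (1 : ℂ) else 0) * (n : ℂ)⁻¹ *
          ∑ j : Fin n,
            mpsCoeff γ B (Function.update (Function.update i x₀ j) x₁ j)) = 0 := by
  set m := (x₀ : ℕ) with hm
  have hml : m + 1 < ℓ := by
    have := x₁.isLt; omega
  have hx₀ : x₀ = ⟨m, by omega⟩ := by ext; rfl
  have hx₁ : x₁ = ⟨m+1, hml⟩ := by ext; exact hadj
  have hne : x₀ ≠ x₁ := fun hc => by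
    have : (x₀ : ℕ) = (x₁ : ℕ) := by rw [hc]
    omega
  have hn0 : (n : ℂ) ≠ 0 := by
    have : 0 < n := (i x₀).pos
    exact_mod_cast Nat.cast_ne_zero.mpr this.ne'
  have hsq : ∀ j, γ j * γ j = 1 := by
    intro j
    have h := hrel j j
    simp only [if_pos rfl] at h
    have h2 : (2 : ℂ) • (γ j * γ j) = (2 : ℂ) • (1 : Matrix (Fin N) (Fin N) ℂ) := by
      rw [two_smul]; exact h
    exact smul_right_injective _ (by norm_num) h2
  set A := ((List.ofFn fun k => γ (i k)).take m).reverse.prod with hA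
  set C := ((List.ofFn fun k => γ (i k)).drop (m+2)).reverse.prod with hC
  set a := i x₀ with ha
  set b := i x₁ with hb
  have agree_off : ∀ (i' : Fin ℓ → Fin n),
      (∀ k : Fin ℓ, (k : ℕ) ≠ m → (k : ℕ) ≠ m + 1 → i' k = i k) →
      ∀ (p q : Fin n), i' ⟨m, by omega⟩ = p → i' ⟨m+1, hml⟩ = q →
      mpsCoeff γ B i' = Matrix.trace (B * (C * (γ q * (γ p * A)))) := by
    intro i' hoff p q hp hq
    rw [mps_split γ B i' m hml, hp, hq, hA, hC,
      take_congr γ i' i m (fun k hk => hoff k (by omega) (by omega)),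
      drop_congr γ i' i (m+2) (fun k hk => hoff k (by omega) (by omega))]
  have e1 : mpsCoeff γ B i = Matrix.trace (B * (C * (γ b * (γ a * A)))) := by
    apply agree_off i (fun _ _ _ => rfl) a b
    · rfl
    · exact congrArg i hx₁.symm
  have e2 : mpsCoeff γ B (i ∘ Equiv.swap x₀ x₁)
      = Matrix.trace (B * (C * (γ a * (γ b * A)))) := by
    apply agree_off _ ?_ b a
    · exact congrArg i (Equiv.swap_apply_left x₀ x₁)
    · exact (congrArg (fun t => i (Equiv.swap x₀ x₁ t)) hx₁.symm).trans
        (congrArg i (Equiv.swap_apply_right x₀ x₁))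
    · intro k hk1 hk2
      show i (Equiv.swap x₀ x₁ k) = i k
      rw [Equiv.swap_apply_of_ne_of_ne]
      · exact fun hc => hk1 (by rw [hc, hm])
      · exact fun hc => hk2 (by rw [hc]; exact hadj)
  have e3 : ∀ j : Fin n, mpsCoeff γ B (Function.update (Function.update i x₀ j) x₁ j)
      = Matrix.trace (B * (C * (γ j * (γ j * A)))) := by
    intro j
    apply agree_off _ ?_ j j
    · show Function.update (Function.update i x₀ j) x₁ j x₀ = j
      rw [Function.update_of_ne hne, Function.update_self]
    · have h' := congrArg (Function.update (Function.update i x₀ j) x₁ j) hx₁.symm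
      rw [Function.update_self] at h'
      exact h'
    · intro k hk1 hk2
      have hk₀ : k ≠ x₀ := fun hc => hk1 (by rw [hc, hm])
      have hk₁ : k ≠ x₁ := fun hc => hk2 (by rw [hc]; exact hadj)
      rw [Function.update_of_ne hk₁, Function.update_of_ne hk₀]
  rw [e1, e2]
  simp only [e3]
  clear_value a b
  by_cases hab : a = b
  · subst hab
    have hAA : ∀ j, γ j * (γ j * A) = A := fun j => by rw [← mul_assoc, hsq, one_mul]
    simp only [if_pos rfl, hAA, ↓reduceIte]
    rw [Finset.sum_const, Finset.card_univ, Fintype.card_fin, nsmul_eq_mul]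
    field_simp
    ring
  · rw [if_neg hab]
    have hanti : γ b * γ a + γ a * γ b = 0 := by
      have h := hrel b a
      rwa [if_neg (fun hc => hab hc.symm)] at h
    have hz : γ b * (γ a * A) + γ a * (γ b * A) = 0 := by
      rw [← mul_assoc, ← mul_assoc, ← add_mul, hanti, zero_mul]
    have hzero : Matrix.trace (B * (C * (γ b * (γ a * A))))
        + Matrix.trace (B * (C * (γ a * (γ b * A)))) = 0 := by
      rw [← Matrix.trace_add, ← Matrix.mul_add, ← Matrix.mul_add, hz]
      simp
    rw [hzero]
    ring
end
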